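/- For each i, j ≥ 1 let Q_i^j = {x ∈ ℝ/ℤ : d(T^i x, x) ≤ 2^{−j}} where T(x) = 2x mod 1 and d is the circle distance. Then for any dyadic interval J = [m/2^i, (m+1)/2^i), the set J ∩ Q_i^j is contained in at most 3 intervals, each of length 2/(2^j(2^i − 1)). -/

import Mathlib

/-- The doubling map on the circle `ℝ/ℤ`. -/
noncomputable def double : AddCircle (1:ℝ) → AddCircle (1:ℝ) := fun z => z + z

lemma double_iter (n : ℕ) (y : ℝ) :
    double^[n] ((y : ℝ) : AddCircle (1:ℝ)) = ((2^n * y : ℝ) : AddCircle (1:ℝ)) := by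
  induction n with
  | zero => simp
  | succ n ih =>
    rw [Function.iterate_succ_apply', ih]
    show (((2^n * y : ℝ) : AddCircle (1:ℝ)) + ((2^n * y : ℝ) : AddCircle (1:ℝ))) = _
    rw [← QuotientAddGroup.mk_add]
    congr 1
    ring

lemma norm_circle (z : ℝ) : ‖(z : AddCircle (1:ℝ))‖ = |z - round z| := by
  rw [AddCircle.norm_eq]; norm_num

theorem stmt10 (i j : ℕ) (hi : 1 ≤ i) (hj : 1 ≤ j) (m : ℕ) (hm : m < 2^i) :
    ∃ c₁ c₂ c₃ : AddCircle (1:ℝ),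
      ∀ x : AddCircle (1:ℝ),
        (∃ y : ℝ, y ∈ Set.Ico ((m : ℝ) / 2^i) (((m : ℝ) + 1) / 2^i) ∧ x = (y : AddCircle (1:ℝ))) →
        dist (double^[i] x) x ≤ (2:ℝ)^(-(j:ℤ)) →
        dist x c₁ ≤ 1 / (2^j * (2^i - 1)) ∨ dist x c₂ ≤ 1 / (2^j * (2^i - 1)) ∨
          dist x c₃ ≤ 1 / (2^j * (2^i - 1)) := by
  have h2i : (2:ℝ) ≤ 2^i := by
    calc (2:ℝ) = 2^1 := (pow_one 2).symm
    _ ≤ 2^i := pow_le_pow_right₀ one_le_two hi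
  have hD : (0:ℝ) < 2^i - 1 := by linarith
  set D : ℝ := 2^i - 1 with hDdef
  clear_value D
  set n₀ : ℤ := ⌊(m : ℝ) * D / 2^i⌋ with hn₀
  have hfl : (n₀ : ℝ) ≤ (m:ℝ) * D / 2^i := Int.floor_le _
  have hfl2 : (m:ℝ) * D / 2^i < (n₀ : ℝ) + 1 := Int.lt_floor_add_one _
  clear_value n₀
  refine ⟨((((n₀:ℝ)+0) / D : ℝ) : AddCircle (1:ℝ)), ((((n₀:ℝ)+1) / D : ℝ) : AddCircle (1:ℝ)),
    ((((n₀:ℝ)+2) / D : ℝ) : AddCircle (1:ℝ)), ?_⟩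
  rintro x ⟨y, ⟨hy1, hy2⟩, rfl⟩ hd
  rw [double_iter] at hd
  have hdist : dist (((2^i * y : ℝ) : AddCircle (1:ℝ))) ((y : ℝ) : AddCircle (1:ℝ))
      = |(2^i * y - y) - round (2^i * y - y)| := by
    rw [dist_eq_norm, ← QuotientAddGroup.mk_sub, norm_circle]
  rw [hdist] at hd
  set r : ℤ := round ((2:ℝ)^i * y - y) with hr
  clear_value r
  have hj2 : (2:ℝ)^(-(j:ℤ)) ≤ 1/2 := by
    have h1 : (2:ℝ)^(-(1:ℤ)) = 1/2 := by norm_num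
    rw [← h1]
    exact zpow_le_zpow_right₀ one_le_two (by omega)
  have hkey : |D * y - (r:ℝ)| ≤ (2:ℝ)^(-(j:ℤ)) := by
    have hDy : D * y = 2^i * y - y := by rw [hDdef]; ring
    rw [hDy]; exact hd
  have habs := abs_le.mp hkey
  have hpos : (0:ℝ) < 2^i := by linarith
  -- bounds on D*y
  have hA1 : (m:ℝ) * D / 2^i ≤ D * y := by
    rw [div_le_iff₀ hpos]
    have := (div_le_iff₀ hpos).mp hy1
    nlinarith
  have hA2 : D * y < ((m:ℝ) + 1) * D / 2^i := by
    rw [lt_div_iff₀ hpos]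
    have := (lt_div_iff₀ hpos).mp hy2
    nlinarith
  have hDlt : D / 2^i < 1 := (div_lt_one hpos).mpr (by linarith)
  -- r ∈ {n₀, n₀+1, n₀+2}
  have hrlo : n₀ ≤ r := by
    have h0 : (n₀ : ℝ) - 1 < (r : ℝ) := by
      have h1 : (r:ℝ) ≥ D * y - (2:ℝ)^(-(j:ℤ)) := by linarith
      linarith
    have h2 : n₀ - 1 < r := by exact_mod_cast h0
    omega
  have hrhi : r ≤ n₀ + 2 := by
    have h3 : (r : ℝ) < (n₀ : ℝ) + 3 := by
      have h1 : (r:ℝ) ≤ D * y + (2:ℝ)^(-(j:ℤ)) := by linarith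
      have h2 : ((m:ℝ) + 1) * D / 2^i = (m:ℝ) * D / 2^i + D / 2^i := by ring
      linarith
    have : (r : ℤ) < n₀ + 3 := by exact_mod_cast h3
    omega
  -- distance bound for the relevant center
  have hbound : ∀ k : ℝ, (r : ℝ) = (n₀ : ℝ) + k →
      dist ((y : ℝ) : AddCircle (1:ℝ)) ((((n₀:ℝ)+k) / D : ℝ) : AddCircle (1:ℝ))
        ≤ 1 / (2^j * D) := by
    intro k hk
    rw [dist_eq_norm, ← QuotientAddGroup.mk_sub]
    calc ‖((y - ((n₀:ℝ)+k)/D : ℝ) : AddCircle (1:ℝ))‖ ≤ ‖(y - ((n₀:ℝ)+k)/D : ℝ)‖ :=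
          QuotientAddGroup.norm_mk_le_norm
    _ = |y - ((n₀:ℝ)+k)/D| := Real.norm_eq_abs _
    _ ≤ 1 / (2^j * D) := by
        rw [← hk]
        have h1 : y - (r:ℝ)/D = (D * y - (r:ℝ)) / D := by field_simp
        have hjD : (0:ℝ) < 2^j * D := mul_pos (by positivity) hD
        rw [h1, abs_div, abs_of_pos hD, div_le_div_iff₀ hD hjD]
        have h2 : (2:ℝ)^(-(j:ℤ)) * (2^j : ℝ) = 1 := by
          rw [← zpow_natCast (2:ℝ) j, ← zpow_add₀ (by norm_num : (2:ℝ) ≠ 0)]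
          norm_num
        calc |D * y - (r:ℝ)| * (2^j * D)
            ≤ (2:ℝ)^(-(j:ℤ)) * (2^j * D) := mul_le_mul_of_nonneg_right hkey hjD.le
        _ = 1 * D := by rw [← mul_assoc, h2]
  rcases (by omega : r = n₀ ∨ r = n₀ + 1 ∨ r = n₀ + 2) with h | h | h
  · exact Or.inl (hbound 0 (by rw [h]; push_cast; ring))
  · exact Or.inr (Or.inl (hbound 1 (by rw [h]; push_cast; ring)))
  · exact Or.inr (Or.inr (hbound 2 (by rw [h]; push_cast; ring)))
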